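/- For a finite dimensional Leibniz algebra h and a Leibniz algebra g, the set of Leibniz algebra homomorphisms g → h is in bijection with the set of k-algebra homomorphisms (characters) A(h,g) → k. -/

import Mathlib

open TensorProduct MvPolynomial

/-- The universal polynomial `P_{(a,i,j)} = Σ_u β^u_{ij} X_{au} - Σ_{s,t} τ^a_{st} X_{si} X_{tj}`. -/
noncomputable def univPoly {k : Type*} [Field k] {n : ℕ} {I : Type*}
    (τ : Fin n → Fin n → Fin n → k) (β : I → I → I →₀ k)
    (a : Fin n) (i j : I) : MvPolynomial (Fin n × I) k :=
  (β i j).sum (fun u c => C c * X (a, u)) -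
    ∑ s : Fin n, ∑ t : Fin n, C (τ s t a) * X (s, i) * X (t, j)

/-- The ideal generated by the universal polynomials. -/
noncomputable def univIdeal {k : Type*} [Field k] {n : ℕ} {I : Type*}
    (τ : Fin n → Fin n → Fin n → k) (β : I → I → I →₀ k) :
    Ideal (MvPolynomial (Fin n × I) k) :=
  Ideal.span (Set.range fun p : Fin n × I × I => univPoly τ β p.1 p.2.1 p.2.2)

/-- The universal algebra `A(h,g)`. -/
noncomputable abbrev univAlg {k : Type*} [Field k] {n : ℕ} {I : Type*}
    (τ : Fin n → Fin n → Fin n → k) (β : I → I → I →₀ k) :=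
  MvPolynomial (Fin n × I) k ⧸ univIdeal τ β

/-- The generator `x_{si}` of `A(h,g)`. -/
noncomputable def univGen {k : Type*} [Field k] {n : ℕ} {I : Type*}
    (τ : Fin n → Fin n → Fin n → k) (β : I → I → I →₀ k)
    (s : Fin n) (i : I) : univAlg τ β :=
  Ideal.Quotient.mk (univIdeal τ β) (X (s, i))

set_option maxHeartbeats 1000000
set_option synthInstance.maxHeartbeats 400000
section Aux
variable {k : Type*} [Field k] {n : ℕ} {I : Type*}
  (τ : Fin n → Fin n → Fin n → k) (β : I → I → I →₀ k)

lemma map_beta_apply (g : (I →₀ k) →ₗ[k] (Fin n → k)) (i j : I) (a : Fin n) :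
    g (β i j) a = (β i j).sum fun u c => c * g (Finsupp.single u 1) a := by
  conv_lhs => rw [← Finsupp.sum_single (β i j), Finsupp.sum]
  rw [map_sum, Finset.sum_apply, Finsupp.sum, Finset.sum_congr rfl]
  intro u _
  rw [← Finsupp.smul_single_one u ((β i j) u), map_smul]
  simp

lemma bH_apply (bH : (Fin n → k) →ₗ[k] (Fin n → k) →ₗ[k] (Fin n → k))
    (hbH : ∀ i j : Fin n, bH (Pi.single i 1) (Pi.single j 1) = fun s => τ i j s)
    (x y : Fin n → k) (a : Fin n) :
    bH x y a = ∑ s : Fin n, ∑ t : Fin n, x s * y t * τ s t a := by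
  have hx : x = ∑ s : Fin n, x s • (Pi.single s 1 : Fin n → k) := by
    funext m
    simp [Finset.sum_apply, Pi.single_apply]
  have hy : y = ∑ t : Fin n, y t • (Pi.single t 1 : Fin n → k) := by
    funext m
    simp [Finset.sum_apply, Pi.single_apply]
  conv_lhs => rw [hx, hy]
  rw [map_sum]
  simp only [map_smul, LinearMap.smul_apply, map_sum, LinearMap.sum_apply,
    Finset.sum_apply, Pi.smul_apply, smul_eq_mul, hbH]
  rw [Finset.sum_comm]
  refine Finset.sum_congr rfl fun t _ => ?_
  rw [Finset.mul_sum]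
  refine Finset.sum_congr rfl fun s _ => ?_
  ring

lemma gen_def (s : Fin n) (i : I) :
    Ideal.Quotient.mk (univIdeal τ β) (X (s, i)) = univGen τ β s i := rfl

lemma theta_C (θ : univAlg τ β →ₐ[k] k) (c : k) :
    θ (Ideal.Quotient.mk (univIdeal τ β) (C c)) = c := by
  have : (Ideal.Quotient.mk (univIdeal τ β) (C c) : univAlg τ β) =
      algebraMap k (univAlg τ β) c := rfl
  rw [this, AlgHom.commutes]
  simp

lemma gen_rel (θ : univAlg τ β →ₐ[k] k) (a : Fin n) (i j : I) :
    ((β i j).sum fun u c => c * θ (univGen τ β a u)) =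
      ∑ s : Fin n, ∑ t : Fin n, τ s t a * θ (univGen τ β s i) * θ (univGen τ β t j) := by
  have hmem : univPoly τ β a i j ∈ univIdeal τ β :=
    Ideal.subset_span ⟨(a, i, j), rfl⟩
  have h0 : θ (Ideal.Quotient.mk (univIdeal τ β) (univPoly τ β a i j)) = 0 := by
    rw [Ideal.Quotient.eq_zero_iff_mem.mpr hmem, map_zero]
  rw [univPoly] at h0
  simp only [map_sub, Finsupp.sum, map_sum, map_mul, sub_eq_zero,
    gen_def, theta_C] at h0
  rw [Finsupp.sum]
  exact h0
end Aux

/-- Leibniz algebra homomorphisms `g → h` are in bijection with the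
characters `A(h,g) → k`: the map sending `θ` to `(h ⊗ θ) ∘ η_g` composed with the
canonical isomorphism `h ⊗ k ≅ h` is well defined and bijective onto the set of
Leibniz algebra homomorphisms. -/
theorem stmt_4 (k : Type*) [Field k] (n : ℕ) (I : Type*)
    (τ : Fin n → Fin n → Fin n → k) (β : I → I → I →₀ k)
    (bH : (Fin n → k) →ₗ[k] (Fin n → k) →ₗ[k] (Fin n → k))
    (hbH : ∀ i j : Fin n, bH (Pi.single i 1) (Pi.single j 1) = fun s => τ i j s)
    (hLH : ∀ x y z, bH x (bH y z) = bH (bH x y) z - bH (bH x z) y)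
    (bG : (I →₀ k) →ₗ[k] (I →₀ k) →ₗ[k] (I →₀ k))
    (hbG : ∀ i j : I, bG (Finsupp.single i 1) (Finsupp.single j 1) = β i j)
    (hLG : ∀ x y z, bG x (bG y z) = bG (bG x y) z - bG (bG x z) y)
    (η : (I →₀ k) →ₗ[k] (Fin n → k) ⊗[k] univAlg τ β)
    (hη : ∀ i : I, η (Finsupp.single i 1) =
      ∑ s : Fin n, Pi.single s 1 ⊗ₜ[k] univGen τ β s i) :
    (∀ θ : univAlg τ β →ₐ[k] k, ∀ u v : I →₀ k,
      ((TensorProduct.rid k (Fin n → k)).toLinearMap ∘ₗ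
          TensorProduct.map LinearMap.id θ.toLinearMap ∘ₗ η) (bG u v) =
        bH (((TensorProduct.rid k (Fin n → k)).toLinearMap ∘ₗ
              TensorProduct.map LinearMap.id θ.toLinearMap ∘ₗ η) u)
           (((TensorProduct.rid k (Fin n → k)).toLinearMap ∘ₗ
              TensorProduct.map LinearMap.id θ.toLinearMap ∘ₗ η) v)) ∧
    (∀ f : (I →₀ k) →ₗ[k] (Fin n → k),
      (∀ u v : I →₀ k, f (bG u v) = bH (f u) (f v)) →
        ∃! θ : univAlg τ β →ₐ[k] k,
          (TensorProduct.rid k (Fin n → k)).toLinearMap ∘ₗ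
            TensorProduct.map LinearMap.id θ.toLinearMap ∘ₗ η = f) := by
  have hFs : ∀ (θ : univAlg τ β →ₐ[k] k) (i : I),
      ((TensorProduct.rid k (Fin n → k)).toLinearMap ∘ₗ
        TensorProduct.map LinearMap.id θ.toLinearMap ∘ₗ η) (Finsupp.single i 1) =
      fun s => θ (univGen τ β s i) := by
    intro θ i
    simp only [LinearMap.comp_apply, hη, map_sum, TensorProduct.map_tmul,
      LinearMap.id_apply, AlgHom.toLinearMap_apply, LinearEquiv.coe_coe,
      TensorProduct.rid_tmul]
    funext m
    simp [Finset.sum_apply, Pi.single_apply]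
  constructor
  · intro θ u v
    set Fθ := (TensorProduct.rid k (Fin n → k)).toLinearMap ∘ₗ
        TensorProduct.map LinearMap.id θ.toLinearMap ∘ₗ η with hFθ
    have core : ∀ i j : I, Fθ (bG (Finsupp.single i 1) (Finsupp.single j 1)) =
        bH (Fθ (Finsupp.single i 1)) (Fθ (Finsupp.single j 1)) := by
      intro i j
      rw [hbG]
      funext a
      rw [map_beta_apply β Fθ i j a, bH_apply τ bH hbH]
      simp only [hFθ, hFs θ]
      rw [gen_rel τ β θ a i j]
      exact Finset.sum_congr rfl fun s _ => Finset.sum_congr rfl fun t _ => by ring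
    have key : LinearMap.compr₂ bG Fθ = LinearMap.compl₁₂ bH Fθ Fθ := by
      apply Finsupp.lhom_ext
      intro i b
      apply Finsupp.lhom_ext
      intro j c
      rw [← Finsupp.smul_single_one i b, ← Finsupp.smul_single_one j c]
      simp only [map_smul, LinearMap.smul_apply, LinearMap.compr₂_apply,
        LinearMap.compl₁₂_apply, LinearMap.map_smul]
      rw [core i j]
    exact LinearMap.congr_fun (LinearMap.congr_fun key u) v
  · intro f hf
    set φ : MvPolynomial (Fin n × I) k →ₐ[k] k :=
      aeval (fun p : Fin n × I => f (Finsupp.single p.2 1) p.1) with hφ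
    have hker : ∀ x ∈ univIdeal τ β, φ x = 0 := by
      have hle : univIdeal τ β ≤ RingHom.ker φ.toRingHom := by
        rw [univIdeal, Ideal.span_le]
        rintro _ ⟨⟨a, i, j⟩, rfl⟩
        simp only [SetLike.mem_coe, RingHom.mem_ker, AlgHom.toRingHom_eq_coe,
          RingHom.coe_coe]
        rw [univPoly, map_sub, sub_eq_zero]
        have h2 := hf (Finsupp.single i 1) (Finsupp.single j 1)
        rw [hbG] at h2
        have h1 := congrFun h2 a
        rw [map_beta_apply β f i j a, bH_apply τ bH hbH] at h1
        simp only [Finsupp.sum, map_sum, map_mul, hφ, aeval_X, aeval_C,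
          Algebra.algebraMap_self_apply]
        rw [Finsupp.sum] at h1
        rw [h1]
        exact Finset.sum_congr rfl fun s _ => Finset.sum_congr rfl fun t _ => by ring
      intro x hx
      exact hle hx
    set θ₀ : univAlg τ β →ₐ[k] k := Ideal.Quotient.liftₐ (univIdeal τ β) φ hker with hθ₀
    have hθ₀gen : ∀ (s : Fin n) (i : I), θ₀ (univGen τ β s i) = f (Finsupp.single i 1) s := by
      intro s i
      rw [univGen, hθ₀, Ideal.Quotient.liftₐ_apply]
      refine (Ideal.Quotient.lift_mk _ _ _).trans ?_
      simp [hφ, aeval_X]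
    have hFeq : (TensorProduct.rid k (Fin n → k)).toLinearMap ∘ₗ
        TensorProduct.map LinearMap.id θ₀.toLinearMap ∘ₗ η = f := by
      apply Finsupp.lhom_ext
      intro i b
      rw [← Finsupp.smul_single_one i b, map_smul, map_smul]
      congr 1
      rw [hFs θ₀ i]
      funext s
      exact hθ₀gen s i
    refine ⟨θ₀, hFeq, ?_⟩
    intro θ hθ
    have hgen : ∀ (s : Fin n) (i : I), θ (univGen τ β s i) = f (Finsupp.single i 1) s := by
      intro s i
      have h1 := hFs θ i
      rw [hθ] at h1
      exact (congrFun h1 s).symm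
    apply Ideal.Quotient.algHom_ext
    apply MvPolynomial.algHom_ext
    rintro ⟨s, i⟩
    simp only [AlgHom.comp_apply, Ideal.Quotient.mkₐ_eq_mk]
    show θ (univGen τ β s i) = θ₀ (univGen τ β s i)
    rw [hgen s i, hθ₀gen s i]
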